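/- Let f be a continuous 2π-periodic piecewise C¹ function. Then for every u ≠ 0, the absolutely convergent series Σ_{p∈ℤ} f̂(p) f̂(−p) K(pu) equals (1/u)∫₀^u (f∗f̌)(x) dx, and for u = 0 it equals ⟨f,f⟩. -/

import Mathlib

open MeasureTheory Filter Set
open scoped ENNReal
open AddCircle

noncomputable section

/-- `K(x) = ∫₀¹ e^{iux} du`. -/
def Kker (x : ℝ) : ℂ := ∫ u in (0:ℝ)..1, Complex.exp (Complex.I * u * x)

/-- Fourier coefficient `f̂(p) := (1/2π) ∫₀^{2π} f(t) e^{-ipt} dt`. -/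
def fCoeff (g : ℝ → ℝ) (p : ℤ) : ℂ :=
  (1 / (2 * Real.pi)) * ∫ t in (0:ℝ)..(2 * Real.pi),
    (g t : ℂ) * Complex.exp (-(Complex.I * p * t))

/-- Scalar product `⟨g,h⟩ := (1/2π)∫₀^{2π} g(t)h(t) dt`. -/
def iprod (g h : ℝ → ℝ) : ℝ :=
  (1 / (2 * Real.pi)) * ∫ t in (0:ℝ)..(2 * Real.pi), g t * h t

/-- Convolution `(g∗h)(x) := (1/2π)∫₀^{2π} g(u)h(x−u) du`. -/
def conv (g h : ℝ → ℝ) (x : ℝ) : ℝ :=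
  (1 / (2 * Real.pi)) * ∫ u in (0:ℝ)..(2 * Real.pi), g u * h (x - u)

/-- `f̌(x) := f(−x)`. -/
def checkFn (f : ℝ → ℝ) : ℝ → ℝ := fun x => f (-x)

/-- A continuous `2π`-periodic function which is piecewise `C¹` with a.e. derivative `f'`. -/
def IsPiecewiseC1 (f f' : ℝ → ℝ) : Prop :=
  Continuous f ∧ Function.Periodic f (2 * Real.pi) ∧
  ∃ S : Finset ℝ,
    (∀ x : ℝ, (∀ s ∈ S, ∀ k : ℤ, x ≠ s + 2 * Real.pi * k) → HasDerivAt f (f' x) x) ∧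
    (∀ s ∈ S, (∃ L : ℝ, Tendsto f' (nhdsWithin s (Set.Iio s)) (nhds L)) ∧
              (∃ R : ℝ, Tendsto f' (nhdsWithin s (Set.Ioi s)) (nhds R)))

local instance : Fact (0 < 2 * Real.pi) := ⟨Real.two_pi_pos⟩

lemma fourier_eq (n : ℤ) (x : ℝ) :
    (fourier n (x : AddCircle (2 * Real.pi)) : ℂ) = Complex.exp (Complex.I * n * x) := by
  rw [fourier_coe_apply]
  congr 1
  have : (Real.pi : ℂ) ≠ 0 := Complex.ofReal_ne_zero.mpr Real.pi_ne_zero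
  field_simp
  push_cast
  ring

lemma norm_Kker_le (x : ℝ) : ‖Kker x‖ ≤ 1 := by
  have := intervalIntegral.norm_integral_le_of_norm_le_const
    (a := (0:ℝ)) (b := 1) (C := 1) (f := fun u : ℝ => Complex.exp (Complex.I * u * x)) ?_
  · simpa [Kker] using this
  · intro u _
    show ‖Complex.exp (Complex.I * u * x)‖ ≤ 1
    have h : Complex.I * u * x = ((u * x : ℝ) : ℂ) * Complex.I := by push_cast; ring
    rw [h, Complex.norm_exp_ofReal_mul_I]

lemma Kker_zero : Kker 0 = 1 := by
  simp [Kker]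

lemma lift_continuous {g : ℝ → ℂ} (hg : Continuous g)
    (hpg : Function.Periodic g (2 * Real.pi)) :
    Continuous (hpg.lift : AddCircle (2 * Real.pi) → ℂ) :=
  hg.quotient_liftOn' _

lemma fourierCoeff_lift {g : ℝ → ℝ}
    (hg : Function.Periodic (fun x : ℝ => (g x : ℂ)) (2 * Real.pi)) (p : ℤ) :
    fourierCoeff hg.lift p = fCoeff g p := by
  rw [fourierCoeff_eq_intervalIntegral _ p 0, zero_add, fCoeff, Complex.real_smul]
  congr 1
  · push_cast; ring
  · apply intervalIntegral.integral_congr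
    intro x _
    show (fourier (-p) (x : AddCircle (2 * Real.pi)) : ℂ) • hg.lift x = _
    rw [Function.Periodic.lift_coe, fourier_eq, smul_eq_mul, mul_comm]
    congr 2
    push_cast; ring

lemma summable_sq (f : ℝ → ℝ) (hc : Continuous f)
    (hp : Function.Periodic f (2 * Real.pi)) :
    Summable (fun p : ℤ => ‖fCoeff f p‖ ^ 2) := by
  have hp' : Function.Periodic (fun x : ℝ => (f x : ℂ)) (2 * Real.pi) := fun x => by
    simp [hp x]
  set F : C(AddCircle (2 * Real.pi), ℂ) :=
    ⟨hp'.lift, lift_continuous (by exact Complex.continuous_ofReal.comp hc) hp'⟩ with hF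
  set L := (ContinuousMap.toLp (E := ℂ) 2 haarAddCircle ℂ) F with hL
  have h1 : ∀ p, fourierCoeff (L : AddCircle (2 * Real.pi) → ℂ) p = fCoeff f p := by
    intro p
    rw [hL, fourierCoeff_toLp]
    exact fourierCoeff_lift hp' p
  have h2 : Memℓp (fun i => fourierCoeff (L : AddCircle (2 * Real.pi) → ℂ) i) 2 := by
    have := lp.memℓp (fourierBasis.repr L)
    have he : (fourierBasis.repr L : ℤ → ℂ) =
        fun i => fourierCoeff (L : AddCircle (2 * Real.pi) → ℂ) i := by
      funext i; exact fourierBasis_repr L i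
    rwa [he] at this
  have h3 := (memℓp_gen_iff (by norm_num)).mp h2
  have : (fun i : ℤ => ‖fCoeff f i‖ ^ (2:ℝ)) = fun i : ℤ => ‖fCoeff f i‖ ^ 2 := by
    funext i
    rw [show (2:ℝ) = ((2:ℕ):ℝ) by norm_num, Real.rpow_natCast]
  simp only [h1] at h3
  rw [show (2:ℝ≥0∞).toReal = (2:ℝ) by norm_num] at h3
  rwa [this] at h3

lemma conv_eq (f : ℝ → ℝ) (x : ℝ) :
    conv f (checkFn f) x
      = (1 / (2 * Real.pi)) * ∫ u in (0:ℝ)..(2 * Real.pi), f u * f (u - x) := by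
  unfold conv checkFn
  congr 1
  apply intervalIntegral.integral_congr
  intro u _
  simp [neg_sub]

lemma conv_continuous (f : ℝ → ℝ) (hc : Continuous f) :
    Continuous (conv f (checkFn f)) := by
  have : Continuous fun x : ℝ => ∫ u in (0:ℝ)..(2 * Real.pi), f u * f (u - x) := by
    apply intervalIntegral.continuous_parametric_intervalIntegral_of_continuous'
    exact (hc.comp continuous_snd).mul
      (hc.comp ((continuous_snd.sub continuous_fst)))
  have h2 : Continuous fun x : ℝ => conv f (checkFn f) x := by
    simp only [conv_eq f]
    exact continuous_const.mul this
  exact h2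

lemma conv_periodic (f : ℝ → ℝ) (hp : Function.Periodic f (2 * Real.pi)) :
    Function.Periodic (conv f (checkFn f)) (2 * Real.pi) := by
  intro x
  rw [conv_eq, conv_eq]
  congr 1
  apply intervalIntegral.integral_congr
  intro u _
  show f u * f (u - (x + 2 * Real.pi)) = f u * f (u - x)
  have h : u - (x + 2 * Real.pi) = u - x - 2 * Real.pi := by ring
  rw [h, hp.sub_eq]

lemma two_pi_C_ne : ((2 * Real.pi : ℝ) : ℂ) ≠ 0 := by
  simp [Real.pi_ne_zero, Real.pi_pos.ne']

lemma inner_int (f : ℝ → ℝ) (hp : Function.Periodic f (2 * Real.pi)) (p : ℤ) (u : ℝ) :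
    ∫ t in (0:ℝ)..(2 * Real.pi), (f (u - t) : ℂ) * Complex.exp (-(Complex.I * p * t))
      = Complex.exp (-(Complex.I * p * u)) * ((2 * Real.pi : ℝ) : ℂ) * fCoeff f (-p) := by
  set h : ℝ → ℂ := fun s => (f s : ℂ) * Complex.exp (-(Complex.I * p * (u - s))) with hh
  have hper : Function.Periodic h (2 * Real.pi) := by
    intro s
    simp only [hh, hp s]
    congr 1
    push_cast
    rw [show -(Complex.I * p * (u - (s + 2 * Real.pi)))
        = -(Complex.I * p * (u - s)) + p * (2 * Real.pi * Complex.I) by push_cast; ring,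
      Complex.exp_add, Complex.exp_int_mul_two_pi_mul_I, mul_one]
  have h1 : ∀ t : ℝ, (f (u - t) : ℂ) * Complex.exp (-(Complex.I * p * t)) = h (u - t) := by
    intro t
    simp only [hh]
    congr 2
    push_cast
    ring
  calc ∫ t in (0:ℝ)..(2 * Real.pi), (f (u - t) : ℂ) * Complex.exp (-(Complex.I * p * t))
      = ∫ t in (0:ℝ)..(2 * Real.pi), h (u - t) := by
        apply intervalIntegral.integral_congr; intro t _; exact h1 t
    _ = ∫ s in (u - 2 * Real.pi)..(u - 0), h s := intervalIntegral.integral_comp_sub_left h u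
    _ = ∫ s in (0:ℝ)..(2 * Real.pi), h s := by
        have h2 := hper.intervalIntegral_add_eq (u - 2 * Real.pi) 0
        rw [sub_add_cancel] at h2
        rw [sub_zero, h2, zero_add]
    _ = Complex.exp (-(Complex.I * p * u)) * ∫ t in (0:ℝ)..(2 * Real.pi),
          (f t : ℂ) * Complex.exp (-(Complex.I * ((-p : ℤ) : ℂ) * t)) := by
        rw [← intervalIntegral.integral_const_mul]
        apply intervalIntegral.integral_congr
        intro s _
        simp only [hh]
        rw [show -(Complex.I * p * (u - s))
            = -(Complex.I * p * u) + -(Complex.I * ((-p : ℤ) : ℂ) * s) by push_cast; ring,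
          Complex.exp_add]
        ring
    _ = Complex.exp (-(Complex.I * p * u)) * ((2 * Real.pi : ℝ) : ℂ) * fCoeff f (-p) := by
        rw [fCoeff]
        push_cast
        have h3 : (Real.pi : ℂ) ≠ 0 := Complex.ofReal_ne_zero.mpr Real.pi_ne_zero
        field_simp

lemma fCoeff_conv (f : ℝ → ℝ) (hc : Continuous f)
    (hp : Function.Periodic f (2 * Real.pi)) (p : ℤ) :
    fCoeff (conv f (checkFn f)) p = fCoeff f p * fCoeff f (-p) := by
  have h3 : (Real.pi : ℂ) ≠ 0 := Complex.ofReal_ne_zero.mpr Real.pi_ne_zero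
  set Φ : ℝ → ℝ → ℂ := fun t u =>
    (f u : ℂ) * (f (u - t) : ℂ) * Complex.exp (-(Complex.I * p * t)) with hΦ
  have hΦc : Continuous (Function.uncurry Φ) := by
    apply Continuous.mul
    · exact (Complex.continuous_ofReal.comp (hc.comp continuous_snd)).mul
        (Complex.continuous_ofReal.comp (hc.comp (continuous_snd.sub continuous_fst)))
    · exact Complex.continuous_exp.comp (by fun_prop)
  have hswap : (∫ t in (0:ℝ)..(2 * Real.pi), ∫ u in (0:ℝ)..(2 * Real.pi), Φ t u)
      = ∫ u in (0:ℝ)..(2 * Real.pi), ∫ t in (0:ℝ)..(2 * Real.pi), Φ t u := by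
    have h0 : (0:ℝ) ≤ 2 * Real.pi := Real.two_pi_pos.le
    simp only [intervalIntegral.integral_of_le h0]
    apply MeasureTheory.integral_integral_swap
    rw [Measure.prod_restrict]
    refine IntegrableOn.mono_set ?_
      (Set.prod_mono Set.Ioc_subset_Icc_self Set.Ioc_subset_Icc_self)
    exact (hΦc.continuousOn).integrableOn_compact (isCompact_Icc.prod isCompact_Icc)
  have hg : ∀ t : ℝ, (conv f (checkFn f) t : ℂ)
      = (1 / (2 * (Real.pi : ℂ))) * ∫ u in (0:ℝ)..(2 * Real.pi),
          (f u : ℂ) * (f (u - t) : ℂ) := by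
    intro t
    rw [conv_eq]
    push_cast [← intervalIntegral.integral_ofReal]
    ring
  calc fCoeff (conv f (checkFn f)) p
      = (1 / (2 * Real.pi)) * ∫ t in (0:ℝ)..(2 * Real.pi),
          ((1 / (2 * (Real.pi : ℂ))) * ∫ u in (0:ℝ)..(2 * Real.pi),
            (f u : ℂ) * (f (u - t) : ℂ)) * Complex.exp (-(Complex.I * p * t)) := by
        rw [fCoeff]
        congr 1
        apply intervalIntegral.integral_congr
        intro t _
        show (conv f (checkFn f) t : ℂ) * Complex.exp (-(Complex.I * p * t)) = _
        rw [hg t]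
    _ = (1 / (2 * Real.pi)) * ((1 / (2 * (Real.pi : ℂ))) *
        ∫ t in (0:ℝ)..(2 * Real.pi), ∫ u in (0:ℝ)..(2 * Real.pi), Φ t u) := by
        congr 1
        rw [← intervalIntegral.integral_const_mul]
        apply intervalIntegral.integral_congr
        intro t _
        show ((1 / (2 * (Real.pi : ℂ))) * ∫ u in (0:ℝ)..(2 * Real.pi),
            (f u : ℂ) * (f (u - t) : ℂ)) * Complex.exp (-(Complex.I * p * t))
          = (1 / (2 * (Real.pi : ℂ))) * ∫ u in (0:ℝ)..(2 * Real.pi), Φ t u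
        rw [mul_assoc, ← intervalIntegral.integral_mul_const]
    _ = (1 / (2 * Real.pi)) * ((1 / (2 * (Real.pi : ℂ))) *
        ∫ u in (0:ℝ)..(2 * Real.pi), ∫ t in (0:ℝ)..(2 * Real.pi), Φ t u) := by rw [hswap]
    _ = (1 / (2 * Real.pi)) * ((1 / (2 * (Real.pi : ℂ))) *
        ∫ u in (0:ℝ)..(2 * Real.pi), (f u : ℂ) *
          (Complex.exp (-(Complex.I * p * u)) * ((2 * Real.pi : ℝ) : ℂ) * fCoeff f (-p))) := by
        congr 2
        apply intervalIntegral.integral_congr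
        intro u _
        show (∫ t in (0:ℝ)..(2 * Real.pi), Φ t u) = (f u : ℂ) *
          (Complex.exp (-(Complex.I * p * u)) * ((2 * Real.pi : ℝ) : ℂ) * fCoeff f (-p))
        rw [← inner_int f hp p u, ← intervalIntegral.integral_const_mul]
        apply intervalIntegral.integral_congr
        intro t _
        show Φ t u = (f u : ℂ) * ((f (u - t) : ℂ) * Complex.exp (-(Complex.I * p * t)))
        simp only [hΦ]
        ring
    _ = fCoeff f p * fCoeff f (-p) := by
        have hpull : (∫ u in (0:ℝ)..(2 * Real.pi), (f u : ℂ) *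
              (Complex.exp (-(Complex.I * p * u)) * ((2 * Real.pi : ℝ) : ℂ) * fCoeff f (-p)))
            = (((2 * Real.pi : ℝ) : ℂ) * fCoeff f (-p)) *
              ∫ u in (0:ℝ)..(2 * Real.pi), (f u : ℂ) * Complex.exp (-(Complex.I * p * u)) := by
          rw [← intervalIntegral.integral_const_mul]
          apply intervalIntegral.integral_congr
          intro u _
          show (f u : ℂ) * (Complex.exp (-(Complex.I * p * u)) * ((2 * Real.pi : ℝ) : ℂ)
              * fCoeff f (-p))
            = (((2 * Real.pi : ℝ) : ℂ) * fCoeff f (-p)) *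
              ((f u : ℂ) * Complex.exp (-(Complex.I * p * u)))
          ring
        rw [hpull]
        simp only [fCoeff]
        push_cast
        field_simp

lemma summable_coeffprod (f : ℝ → ℝ) (hc : Continuous f)
    (hp : Function.Periodic f (2 * Real.pi)) :
    Summable (fun p : ℤ => ‖fCoeff f p * fCoeff f (-p)‖) := by
  have h1 := summable_sq f hc hp
  have h2 : Summable (fun p : ℤ => ‖fCoeff f (-p)‖ ^ 2) :=
    ((Equiv.neg ℤ).summable_iff (f := fun p : ℤ => ‖fCoeff f p‖ ^ 2)).mpr h1
  apply Summable.of_nonneg_of_le (fun p => norm_nonneg _) (fun p => ?_)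
    ((h1.add h2).mul_left (1/2))
  rw [norm_mul]
  nlinarith [sq_nonneg (‖fCoeff f p‖ - ‖fCoeff f (-p)‖), norm_nonneg (fCoeff f p),
    norm_nonneg (fCoeff f (-p))]

lemma summable_main (f : ℝ → ℝ) (hc : Continuous f)
    (hp : Function.Periodic f (2 * Real.pi)) (u : ℝ) :
    Summable (fun p : ℤ => ‖fCoeff f p * fCoeff f (-p) * Kker (p * u)‖) := by
  apply Summable.of_nonneg_of_le (fun p => norm_nonneg _) (fun p => ?_)
    (summable_coeffprod f hc hp)
  rw [norm_mul]
  calc ‖fCoeff f p * fCoeff f (-p)‖ * ‖Kker (p * u)‖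
      ≤ ‖fCoeff f p * fCoeff f (-p)‖ * 1 :=
        mul_le_mul_of_nonneg_left (norm_Kker_le _) (norm_nonneg _)
    _ = ‖fCoeff f p * fCoeff f (-p)‖ := mul_one _

lemma hker (u : ℝ) (p : ℤ) :
    ∫ x in (0:ℝ)..u, Complex.exp (Complex.I * p * x) = u * Kker ((p : ℝ) * u) := by
  have h := intervalIntegral.smul_integral_comp_mul_right (a := (0:ℝ)) (b := 1)
    (fun x : ℝ => Complex.exp (Complex.I * p * x)) u
  rw [zero_mul, one_mul] at h
  rw [← h, Kker, Complex.real_smul]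
  congr 1
  apply intervalIntegral.integral_congr
  intro v _
  show Complex.exp (Complex.I * p * ((v * u : ℝ) : ℂ))
    = Complex.exp (Complex.I * v * (((p : ℝ) * u : ℝ) : ℂ))
  congr 1
  push_cast
  ring

theorem statement5 (f f' : ℝ → ℝ) (hf : IsPiecewiseC1 f f') :
    (∀ u : ℝ, Summable (fun p : ℤ => ‖fCoeff f p * fCoeff f (-p) * Kker (p * u)‖)) ∧
    (∀ u : ℝ, u ≠ 0 →
      ∑' p : ℤ, fCoeff f p * fCoeff f (-p) * Kker (p * u) =
        (((1 / u) * ∫ x in (0:ℝ)..u, conv f (checkFn f) x : ℝ) : ℂ)) ∧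
    (∑' p : ℤ, fCoeff f p * fCoeff f (-p) * Kker ((p : ℝ) * 0) = ((iprod f f : ℝ) : ℂ)) := by
  obtain ⟨hc, hp, -⟩ := hf
  set g := conv f (checkFn f) with hgdef
  have hgc : Continuous g := conv_continuous f hc
  have hgp : Function.Periodic g (2 * Real.pi) := conv_periodic f hp
  have hgp' : Function.Periodic (fun x : ℝ => (g x : ℂ)) (2 * Real.pi) := fun x => by
    simp [hgp x]
  set G : C(AddCircle (2 * Real.pi), ℂ) :=
    ⟨hgp'.lift, lift_continuous (Complex.continuous_ofReal.comp hgc) hgp'⟩ with hG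
  have hGcoeff : ∀ p : ℤ, fourierCoeff (⇑G) p = fCoeff f p * fCoeff f (-p) := by
    intro p
    have h1 : fourierCoeff (⇑G) p = fCoeff g p := fourierCoeff_lift hgp' p
    rw [h1, hgdef, fCoeff_conv f hc hp p]
  have hsumnorm : Summable (fun p : ℤ => ‖fourierCoeff (⇑G) p‖) := by
    simp only [hGcoeff]
    exact summable_coeffprod f hc hp
  have hsum : Summable (fourierCoeff (⇑G)) := hsumnorm.of_norm
  refine ⟨fun u => summable_main f hc hp u, ?_, ?_⟩
  · -- part 2
    intro u hu
    have hu' : (u : ℂ) ≠ 0 := Complex.ofReal_ne_zero.mpr hu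
    have hint : ∀ F : C(AddCircle (2 * Real.pi), ℂ),
        IntervalIntegrable (fun x : ℝ => F x) volume 0 u := fun F =>
      Continuous.intervalIntegrable (F.continuous.comp (AddCircle.continuous_mk' _)) 0 u
    set Φlin : C(AddCircle (2 * Real.pi), ℂ) →ₗ[ℂ] ℂ :=
      { toFun := fun F => ∫ x in (0:ℝ)..u, F x
        map_add' := fun F F' => by
          show (∫ x in (0:ℝ)..u, (F + F') x) = (∫ x in (0:ℝ)..u, F x) + ∫ x in (0:ℝ)..u, F' x
          simp only [ContinuousMap.add_apply]
          exact intervalIntegral.integral_add (hint F) (hint F')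
        map_smul' := fun c F => by
          show (∫ x in (0:ℝ)..u, (c • F) x) = c • ∫ x in (0:ℝ)..u, F x
          simp only [ContinuousMap.smul_apply]
          exact intervalIntegral.integral_smul c _ } with hΦlin
    set Φ : C(AddCircle (2 * Real.pi), ℂ) →L[ℂ] ℂ :=
      Φlin.mkContinuous |u| (fun F => by
        show ‖∫ x in (0:ℝ)..u, F x‖ ≤ |u| * ‖F‖
        have hb := intervalIntegral.norm_integral_le_of_norm_le_const (C := ‖F‖)
          (f := fun x : ℝ => F x) (a := 0) (b := u) (fun x _ => F.norm_coe_le_norm _)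
        rw [sub_zero] at hb
        linarith [hb, mul_comm ‖F‖ |u|, le_of_eq (mul_comm ‖F‖ |u|)]) with hΦ
    have h2 := Φ.hasSum (hasSum_fourier_series_of_summable hsum)
    have hfun : ∀ p : ℤ, Φ (fourierCoeff (⇑G) p • fourier p)
        = (fCoeff f p * fCoeff f (-p)) * ((u : ℂ) * Kker ((p : ℝ) * u)) := by
      intro p
      rw [_root_.map_smul, smul_eq_mul, hGcoeff p]
      congr 1
      show (∫ x in (0:ℝ)..u, fourier p (x : AddCircle (2 * Real.pi)))
        = (u : ℂ) * Kker ((p : ℝ) * u)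
      rw [← hker u p]
      apply intervalIntegral.integral_congr
      intro x _
      exact fourier_eq p x
    have hval : Φ G = ((∫ x in (0:ℝ)..u, g x : ℝ) : ℂ) := by
      show (∫ x in (0:ℝ)..u, G x) = ((∫ x in (0:ℝ)..u, g x : ℝ) : ℂ)
      rw [← intervalIntegral.integral_ofReal]
      apply intervalIntegral.integral_congr
      intro x _
      exact Function.Periodic.lift_coe hgp' x
    simp only [hfun] at h2
    rw [hval] at h2
    have h4 := h2.mul_left ((u : ℂ)⁻¹)
    have hfun2 : (fun p : ℤ => (u : ℂ)⁻¹ *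
        ((fCoeff f p * fCoeff f (-p)) * ((u : ℂ) * Kker ((p : ℝ) * u))))
        = fun p : ℤ => fCoeff f p * fCoeff f (-p) * Kker ((p : ℝ) * u) := by
      funext p
      field_simp
    rw [hfun2] at h4
    rw [h4.tsum_eq]
    push_cast
    ring
  · -- part 3
    have h0 := has_pointwise_sum_fourier_series_of_summable hsum (((0:ℝ)) : AddCircle (2 * Real.pi))
    have hG0 : G (((0:ℝ)) : AddCircle (2 * Real.pi)) = (g 0 : ℂ) :=
      Function.Periodic.lift_coe hgp' 0
    have hg0 : g 0 = iprod f f := by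
      rw [hgdef]
      unfold conv iprod checkFn
      congr 1
      apply intervalIntegral.integral_congr
      intro t _
      show f t * f (-(0 - t)) = f t * f t
      rw [neg_sub, sub_zero]
    have hfun3 : ∀ p : ℤ, fourierCoeff (⇑G) p • fourier p (((0:ℝ)) : AddCircle (2 * Real.pi))
        = fCoeff f p * fCoeff f (-p) * Kker ((p : ℝ) * 0) := by
      intro p
      rw [smul_eq_mul, hGcoeff p, fourier_eq]
      norm_num [Kker_zero]
    simp only [hfun3] at h0
    rw [hG0, hg0] at h0
    exact h0.tsum_eq
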